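/- The discriminant D_{F̃} of F̃ satisfies deg D_{F̃} ≤ (2n−2)d and h(D_{F̃}) ≤ (2n−2)·( log( 2n² · C(d+r, r) ) + h ), where C(d+r, r) is the binomial coefficient (d+r choose r). -/

import Mathlib

open scoped BigOperators

/-- The logarithmic height of an integer multivariate polynomial: the logarithm of the
maximum of the absolute values of its coefficients. -/
noncomputable def mheight {r : ℕ} (g : MvPolynomial (Fin r) ℤ) : ℝ :=
  Real.log ((g.support.sup fun m => (g.coeff m).natAbs : ℕ) : ℝ)

/-- The `(2n-2) × (2n-2)` matrix whose determinant is (up to sign) the discriminant of the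
binary form `a₀ Xⁿ + a₁ Xⁿ⁻¹ Y + ⋯ + aₙ Yⁿ`. -/
def discMat {R : Type*} [CommRing R] (n : ℕ) (a : ℕ → R) :
    Matrix (Fin (2*n-2)) (Fin (2*n-2)) R := fun i j =>
  if (i : ℕ) < n - 2 then
    (if (i : ℕ) ≤ (j : ℕ) ∧ (j : ℕ) ≤ (i : ℕ) + n then a ((j : ℕ) - (i : ℕ)) else 0)
  else if (i : ℕ) = n - 2 then
    (if (j : ℕ) + 1 ≤ n then (((j : ℕ) + 1 : ℕ) : R) * a ((j : ℕ) + 1) else 0)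
  else
    (if (i : ℕ) - (n - 1) ≤ (j : ℕ) ∧ (j : ℕ) ≤ (i : ℕ) - (n - 1) + (n - 1)
      then ((n - ((j : ℕ) - ((i : ℕ) - (n - 1))) : ℕ) : R) * a ((j : ℕ) - ((i : ℕ) - (n - 1)))
      else 0)

/-- The discriminant of the binary form with coefficients `a 0, …, a n`. -/
noncomputable def binDisc {R : Type*} [CommRing R] (n : ℕ) (a : ℕ → R) : R := (discMat n a).det


section Aux
open MvPolynomial

lemma multiset_card_finset_sum {ι α : Type*} (s : Finset ι) (f : ι → Multiset α) :
    Multiset.card (∑ i ∈ s, f i) = ∑ i ∈ s, Multiset.card (f i) := by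
  induction s using Finset.cons_induction with
  | empty => simp
  | cons a s ha ih => simp [Finset.sum_cons, ih]

lemma finsupp_card_le_choose {r d : ℕ} (s : Finset (Fin r →₀ ℕ))
    (hs : ∀ m ∈ s, (m.sum fun _ e => e) ≤ d) : s.card ≤ (d + r).choose r := by
  classical
  set f : (Fin r →₀ ℕ) → Multiset (Fin (r+1)) := fun m =>
    (∑ i : Fin r, Multiset.replicate (m i) (Fin.castSucc i)) +
      Multiset.replicate (d - ∑ i : Fin r, m i) (Fin.last r) with hf
  have hcard : ∀ m ∈ s, Multiset.card (f m) = d := by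
    intro m hm
    have hsum : (∑ i : Fin r, m i) ≤ d := by
      have := hs m hm
      rwa [Finsupp.sum_fintype] at this
      intro; rfl
    rw [hf]
    simp only [Multiset.card_add, multiset_card_finset_sum, Multiset.card_replicate]
    omega
  have hcount : ∀ m (j : Fin r), Multiset.count (Fin.castSucc j) (f m) = m j := by
    intro m j
    rw [hf]
    simp only [Multiset.count_add, Multiset.count_sum', Multiset.count_replicate]
    rw [Finset.sum_eq_single j]
    · have h1 : (Fin.castSucc j : Fin (r+1)) ≠ Fin.last r := (Fin.castSucc_lt_last j).ne
      rw [if_pos rfl]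
      rw [if_neg (fun h => h1 h.symm), add_zero]
    · intro b _ hb
      rw [if_neg (fun hc : Fin.castSucc b = Fin.castSucc j => hb (Fin.castSucc_inj.mp hc))]
    · simp
  have key : s.card ≤ ((Finset.univ : Finset (Sym (Fin (r+1)) d)).image
      Sym.toMultiset).card := by
    refine Finset.card_le_card_of_injOn f ?_ ?_
    · intro m hm
      refine Finset.mem_image.2 ⟨(⟨f m, hcard m hm⟩ : Sym (Fin (r+1)) d), Finset.mem_univ _, rfl⟩
    · intro m _ m' _ hEq
      ext j
      rw [← hcount m j, ← hcount m' j, hEq]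
  calc s.card ≤ Fintype.card (Sym (Fin (r+1)) d) := by
        refine key.trans ?_
        refine (Finset.card_image_le).trans ?_
        simp [Finset.card_univ]
    _ = (d + r).choose r := by
        rw [Sym.card_sym_eq_choose, Fintype.card_fin,
          show r + 1 + d - 1 = d + r by omega,
          ← Nat.choose_symm (show d ≤ d + r by omega)]
        congr 1
        omega


lemma coeff_mul_le {r : ℕ} (p q : MvPolynomial (Fin r) ℤ) (K : ℕ) (A B : ℝ)
    (hB : 0 ≤ B) (hK : p.support.card ≤ K)
    (hp : ∀ m, |((p.coeff m : ℤ) : ℝ)| ≤ A)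
    (hq : ∀ m, |((q.coeff m : ℤ) : ℝ)| ≤ B) (m : Fin r →₀ ℕ) :
    |(((p*q).coeff m : ℤ) : ℝ)| ≤ (K : ℝ) * A * B := by
  classical
  have hA : 0 ≤ A := (abs_nonneg _).trans (hp 0)
  rw [coeff_mul]
  push_cast
  refine (Finset.abs_sum_le_sum_abs _ _).trans ?_
  rw [← Finset.sum_filter_add_sum_filter_not (Finset.HasAntidiagonal.antidiagonal m)
    (fun x => x.1 ∈ p.support)]
  have h2 : ∑ x ∈ (Finset.HasAntidiagonal.antidiagonal m).filter (fun x => x.1 ∉ p.support),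
      |((p.coeff x.1 : ℤ) : ℝ) * ((q.coeff x.2 : ℤ) : ℝ)| = 0 := by
    refine Finset.sum_eq_zero fun x hx => ?_
    have : p.coeff x.1 = 0 := by
      have := (Finset.mem_filter.1 hx).2
      simpa [MvPolynomial.mem_support_iff] using this
    simp [this]
  rw [h2, add_zero]
  have hcard : ((Finset.HasAntidiagonal.antidiagonal m).filter (fun x => x.1 ∈ p.support)).card ≤ K := by
    refine le_trans ?_ hK
    refine Finset.card_le_card_of_injOn (fun x => x.1) ?_ ?_
    · intro x hx; exact (Finset.mem_filter.1 hx).2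
    · intro x hx y hy hxy
      have hx' := Finset.HasAntidiagonal.mem_antidiagonal.1 (Finset.mem_filter.1 (Finset.mem_coe.1 hx)).1
      have hy' := Finset.HasAntidiagonal.mem_antidiagonal.1 (Finset.mem_filter.1 (Finset.mem_coe.1 hy)).1
      have hxy' : x.1 = y.1 := hxy
      have h22 : x.2 = y.2 := by
        apply add_left_cancel (a := x.1)
        rw [hx', hxy', hy']
      exact Prod.ext hxy' h22
  calc ∑ x ∈ (Finset.HasAntidiagonal.antidiagonal m).filter (fun x => x.1 ∈ p.support),
        |((p.coeff x.1 : ℤ) : ℝ) * ((q.coeff x.2 : ℤ) : ℝ)|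
      ≤ ∑ _x ∈ (Finset.HasAntidiagonal.antidiagonal m).filter (fun x => x.1 ∈ p.support), A * B := by
        refine Finset.sum_le_sum fun x _ => ?_
        rw [abs_mul]
        exact mul_le_mul (hp x.1) (hq x.2) (abs_nonneg _) hA
    _ ≤ (K : ℝ) * (A * B) := by
        rw [Finset.sum_const, nsmul_eq_mul]
        exact mul_le_mul_of_nonneg_right (by exact_mod_cast hcard) (mul_nonneg hA hB)
    _ = (K : ℝ) * A * B := by ring

lemma coeff_prod_le {r : ℕ} {ι : Type*} (s : Finset ι) (f : ι → MvPolynomial (Fin r) ℤ)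
    (K : ℕ) (A : ℝ) (hA : 0 ≤ A)
    (hK : ∀ i ∈ s, (f i).support.card ≤ K)
    (hc : ∀ i ∈ s, ∀ m, |(((f i).coeff m : ℤ) : ℝ)| ≤ A) :
    ∀ m, |(((∏ i ∈ s, f i).coeff m : ℤ) : ℝ)| ≤ ((K : ℝ) * A) ^ s.card := by
  classical
  induction s using Finset.cons_induction with
  | empty =>
    intro m
    simp only [Finset.prod_empty, Finset.card_empty, pow_zero]
    rcases eq_or_ne m 0 with h | h
    · simp [MvPolynomial.coeff_one, h]
    · rw [MvPolynomial.coeff_one, if_neg (Ne.symm h)]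
      simp
  | cons a s ha ih =>
    intro m
    rw [Finset.prod_cons, Finset.card_cons, pow_succ]
    have h1 : |(((f a * ∏ i ∈ s, f i).coeff m : ℤ) : ℝ)| ≤
        (K : ℝ) * A * (((K : ℝ) * A) ^ s.card) := by
      refine coeff_mul_le _ _ K A _ (pow_nonneg (mul_nonneg (Nat.cast_nonneg _) hA) _)
        (hK a (Finset.mem_cons_self a s)) (hc a (Finset.mem_cons_self a s)) ?_ m
      exact ih (fun i hi => hK i (Finset.mem_cons_of_mem hi))
        (fun i hi => hc i (Finset.mem_cons_of_mem hi))
    calc |(((f a * ∏ i ∈ s, f i).coeff m : ℤ) : ℝ)|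
        ≤ (K : ℝ) * A * (((K : ℝ) * A) ^ s.card) := h1
      _ = ((K : ℝ) * A) ^ s.card * ((K : ℝ) * A) := by ring

lemma det_totalDegree_le {r N d : ℕ} (M : Matrix (Fin N) (Fin N) (MvPolynomial (Fin r) ℤ))
    (hdeg : ∀ i j, (M i j).totalDegree ≤ d) : M.det.totalDegree ≤ N * d := by
  classical
  rw [Matrix.det_apply]
  refine (totalDegree_finset_sum _ _).trans ?_
  refine Finset.sup_le fun σ _ => ?_
  rw [Units.smul_def]
  refine (totalDegree_smul_le _ _).trans ?_
  refine (totalDegree_finset_prod _ _).trans ?_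
  calc ∑ i : Fin N, (M (σ i) i).totalDegree ≤ ∑ _i : Fin N, d :=
        Finset.sum_le_sum fun i _ => hdeg _ _
    _ = N * d := by simp [Finset.sum_const, mul_comm]

lemma det_coeff_le {r N : ℕ} (M : Matrix (Fin N) (Fin N) (MvPolynomial (Fin r) ℤ))
    (K : ℕ) (A : ℝ) (hA : 0 ≤ A)
    (hK : ∀ i j, (M i j).support.card ≤ K)
    (hc : ∀ i j m, |(((M i j).coeff m : ℤ) : ℝ)| ≤ A) :
    ∀ m, |((M.det.coeff m : ℤ) : ℝ)| ≤ (N.factorial : ℝ) * ((K : ℝ) * A) ^ N := by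
  classical
  intro m
  rw [Matrix.det_apply, coeff_sum]
  push_cast
  refine (Finset.abs_sum_le_sum_abs _ _).trans ?_
  have hterm : ∀ σ : Equiv.Perm (Fin N),
      |((coeff m (Equiv.Perm.sign σ • ∏ i : Fin N, M (σ i) i) : ℤ) : ℝ)| ≤
        ((K : ℝ) * A) ^ N := by
    intro σ
    rw [Units.smul_def, coeff_smul]
    have h1 : |((Equiv.Perm.sign σ : ℤ) • coeff m (∏ i : Fin N, M (σ i) i) : ℤ)| =
        |coeff m (∏ i : Fin N, M (σ i) i)| := by
      rcases Int.units_eq_one_or (Equiv.Perm.sign σ) with h | h <;> simp [h]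
    rw [← Int.cast_abs, h1, Int.cast_abs]
    have := coeff_prod_le (Finset.univ : Finset (Fin N)) (fun i => M (σ i) i) K A hA
      (fun i _ => hK _ _) (fun i _ _ => hc _ _ _) m
    simpa using this
  calc ∑ σ : Equiv.Perm (Fin N), |((coeff m (Equiv.Perm.sign σ • ∏ i : Fin N, M (σ i) i) : ℤ) : ℝ)|
      ≤ ∑ _σ : Equiv.Perm (Fin N), ((K : ℝ) * A) ^ N :=
        Finset.sum_le_sum fun σ _ => hterm σ
    _ = (N.factorial : ℝ) * ((K : ℝ) * A) ^ N := by
        rw [Finset.sum_const, nsmul_eq_mul, Finset.card_univ, Fintype.card_perm,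
          Fintype.card_fin]

lemma discMat_entry_form {R : Type*} [CommRing R] (n : ℕ) (hn : 1 ≤ n) (a : ℕ → R)
    (i j : Fin (2*n-2)) :
    ∃ c k : ℕ, c ≤ n ∧ k ≤ n ∧ discMat n a i j = (c : R) * a k := by
  unfold discMat
  split_ifs with h1 h2 h3 h4 h5
  · exact ⟨1, (j : ℕ) - (i : ℕ), hn, by omega, by rw [Nat.cast_one, one_mul]⟩
  · exact ⟨0, 0, Nat.zero_le _, Nat.zero_le _, by rw [Nat.cast_zero, zero_mul]⟩
  · exact ⟨(j : ℕ) + 1, (j : ℕ) + 1, h4, h4, rfl⟩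
  · exact ⟨0, 0, Nat.zero_le _, Nat.zero_le _, by rw [Nat.cast_zero, zero_mul]⟩
  · exact ⟨n - ((j : ℕ) - ((i : ℕ) - (n - 1))), (j : ℕ) - ((i : ℕ) - (n - 1)),
      by omega, by omega, rfl⟩
  · exact ⟨0, 0, Nat.zero_le _, Nat.zero_le _, by rw [Nat.cast_zero, zero_mul]⟩

lemma mheight_coeff_le {r : ℕ} (p : MvPolynomial (Fin r) ℤ) (h : ℝ) (hp : mheight p ≤ h)
    (m : Fin r →₀ ℕ) : |((p.coeff m : ℤ) : ℝ)| ≤ Real.exp h := by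
  classical
  set Hn : ℕ := p.support.sup fun m => (p.coeff m).natAbs with hHn
  have hle : (p.coeff m).natAbs ≤ Hn := by
    by_cases hm : m ∈ p.support
    · exact Finset.le_sup (f := fun m => (p.coeff m).natAbs) hm
    · rw [MvPolynomial.notMem_support_iff.mp hm]; simp
  have h1 : |((p.coeff m : ℤ) : ℝ)| ≤ (Hn : ℝ) := by
    rw [← Int.cast_abs, ← Nat.cast_natAbs]
    exact_mod_cast hle
  refine h1.trans ?_
  rcases Nat.eq_zero_or_pos Hn with h0 | h0
  · simp only [h0, Nat.cast_zero]
    exact (Real.exp_pos h).le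
  · have hpos : (0 : ℝ) < (Hn : ℝ) := by exact_mod_cast h0
    have : Real.log (Hn : ℝ) ≤ h := hp
    calc (Hn : ℝ) = Real.exp (Real.log (Hn : ℝ)) := (Real.exp_log hpos).symm
      _ ≤ Real.exp h := Real.exp_le_exp.mpr this

end Aux

open MvPolynomial in
/-- **Lemma 3.2.**  If `F̃` is a binary form of degree `n ≥ 2` whose coefficients
`ã₀, …, ãₙ ∈ ℤ[X₁,…,X_r]` have total degrees `≤ d` and logarithmic heights `≤ h`, then its
discriminant satisfies `deg D_{F̃} ≤ (2n-2) d` and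
`h(D_{F̃}) ≤ (2n-2) ( log(2 n² (d+r choose r)) + h )`. -/
theorem disc_deg_height_bound
    (r n d : ℕ) (h : ℝ) (hn : 2 ≤ n) (hd : 1 ≤ d) (hh : 1 ≤ h)
    (ta : ℕ → MvPolynomial (Fin r) ℤ)
    (hdeg : ∀ i, i ≤ n → (ta i).totalDegree ≤ d)
    (hht : ∀ i, i ≤ n → mheight (ta i) ≤ h) :
    (binDisc n ta).totalDegree ≤ (2 * n - 2) * d ∧
      mheight (binDisc n ta) ≤
        ((2 * n - 2 : ℕ) : ℝ) *
          (Real.log (2 * (n : ℝ) ^ 2 * ((d + r).choose r : ℝ)) + h) := by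
  classical
  set N : ℕ := 2 * n - 2 with hN
  set B : ℕ := (d + r).choose r with hBdef
  have hB1 : 1 ≤ B := Nat.choose_pos (by omega)
  have hA0 : (0 : ℝ) ≤ (n : ℝ) * Real.exp h := by positivity
  -- entry analysis
  have hdegE : ∀ i j, (discMat n ta i j).totalDegree ≤ d := by
    intro i j
    obtain ⟨c, k, hc, hk, heq⟩ := discMat_entry_form n (by omega) ta i j
    rw [heq, ← map_natCast (MvPolynomial.C : ℤ →+* MvPolynomial (Fin r) ℤ) c]
    refine (totalDegree_mul _ _).trans ?_
    rw [totalDegree_C, zero_add]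
    exact hdeg k hk
  have hKE : ∀ i j, (discMat n ta i j).support.card ≤ B := by
    intro i j
    obtain ⟨c, k, hc, hk, heq⟩ := discMat_entry_form n (by omega) ta i j
    have hsub : (discMat n ta i j).support ⊆ (ta k).support := by
      intro m hm
      rw [MvPolynomial.mem_support_iff] at hm ⊢
      rw [heq, ← map_natCast (MvPolynomial.C : ℤ →+* MvPolynomial (Fin r) ℤ) c,
        coeff_C_mul] at hm
      exact right_ne_zero_of_mul hm
    refine (Finset.card_le_card hsub).trans ?_
    exact finsupp_card_le_choose _ (fun m hm => (le_totalDegree hm).trans (hdeg k hk))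
  have hcE : ∀ i j m, |(((discMat n ta i j).coeff m : ℤ) : ℝ)| ≤ (n : ℝ) * Real.exp h := by
    intro i j m
    obtain ⟨c, k, hc, hk, heq⟩ := discMat_entry_form n (by omega) ta i j
    rw [heq, ← map_natCast (MvPolynomial.C : ℤ →+* MvPolynomial (Fin r) ℤ) c, coeff_C_mul]
    push_cast
    rw [abs_mul, abs_of_nonneg (by positivity : (0:ℝ) ≤ (c:ℝ))]
    refine mul_le_mul (by exact_mod_cast hc) (mheight_coeff_le _ h (hht k hk) m)
      (abs_nonneg _) (Nat.cast_nonneg _)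
  constructor
  · exact det_totalDegree_le _ hdegE
  · -- height bound
    have hub : ∀ m, |(((binDisc n ta).coeff m : ℤ) : ℝ)| ≤
        (N.factorial : ℝ) * ((B : ℝ) * ((n : ℝ) * Real.exp h)) ^ N := by
      intro m
      exact det_coeff_le (discMat n ta) B ((n : ℝ) * Real.exp h) hA0 hKE hcE m
    have hn2 : (2 : ℝ) ≤ (n : ℝ) := by exact_mod_cast hn
    have hB2 : (1 : ℝ) ≤ (B : ℝ) := by exact_mod_cast hB1
    have hx1 : (1 : ℝ) ≤ 2 * (n : ℝ) ^ 2 * (B : ℝ) := by nlinarith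
    have hxpos : (0 : ℝ) < 2 * (n : ℝ) ^ 2 * (B : ℝ) := by linarith
    have hbound : (N.factorial : ℝ) * ((B : ℝ) * ((n : ℝ) * Real.exp h)) ^ N ≤
        (2 * (n : ℝ) ^ 2 * (B : ℝ) * Real.exp h) ^ N := by
      have hfac : (N.factorial : ℝ) ≤ ((2 * n : ℕ) : ℝ) ^ N := by
        have : N.factorial ≤ (2 * n) ^ N :=
          (Nat.factorial_le_pow N).trans (Nat.pow_le_pow_left (by omega) N)
        exact_mod_cast this
      calc (N.factorial : ℝ) * ((B : ℝ) * ((n : ℝ) * Real.exp h)) ^ N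
          ≤ ((2 * n : ℕ) : ℝ) ^ N * ((B : ℝ) * ((n : ℝ) * Real.exp h)) ^ N := by
            refine mul_le_mul_of_nonneg_right hfac (by positivity)
        _ = (2 * (n : ℝ) ^ 2 * (B : ℝ) * Real.exp h) ^ N := by
            push_cast
            ring
    -- now pass to mheight
    have hRHS : Real.log ((2 * (n : ℝ) ^ 2 * (B : ℝ) * Real.exp h) ^ N) =
        (N : ℝ) * (Real.log (2 * (n : ℝ) ^ 2 * (B : ℝ)) + h) := by
      rw [Real.log_pow, Real.log_mul (ne_of_gt hxpos) (Real.exp_ne_zero h), Real.log_exp]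
    set Hd : ℕ := (binDisc n ta).support.sup fun m => ((binDisc n ta).coeff m).natAbs with hHd
    have hRHS0 : 0 ≤ ((N : ℕ) : ℝ) * (Real.log (2 * (n : ℝ) ^ 2 * (B : ℝ)) + h) := by
      have := Real.log_nonneg hx1
      have hN0 : (0:ℝ) ≤ (N : ℝ) := Nat.cast_nonneg _
      nlinarith
    show Real.log ((Hd : ℕ) : ℝ) ≤ ((N : ℕ) : ℝ) * (Real.log (2 * (n : ℝ) ^ 2 * (B : ℝ)) + h)
    rcases Nat.eq_zero_or_pos Hd with h0 | h0
    · rw [h0]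
      simpa using hRHS0
    · have hne : (binDisc n ta).support.Nonempty := by
        by_contra hcon
        rw [Finset.not_nonempty_iff_eq_empty] at hcon
        rw [hHd, hcon] at h0
        simp at h0
      obtain ⟨m₀, hm₀, hsup⟩ := Finset.exists_mem_eq_sup _ hne
        (fun m => ((binDisc n ta).coeff m).natAbs)
      have hHdle : ((Hd : ℕ) : ℝ) ≤ (2 * (n : ℝ) ^ 2 * (B : ℝ) * Real.exp h) ^ N := by
        have : ((Hd : ℕ) : ℝ) = |(((binDisc n ta).coeff m₀ : ℤ) : ℝ)| := by
          rw [hHd, hsup, Nat.cast_natAbs, Int.cast_abs]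
        rw [this]
        exact (hub m₀).trans hbound
      have hHdpos : (0 : ℝ) < ((Hd : ℕ) : ℝ) := by exact_mod_cast h0
      calc Real.log ((Hd : ℕ) : ℝ)
          ≤ Real.log ((2 * (n : ℝ) ^ 2 * (B : ℝ) * Real.exp h) ^ N) :=
            Real.log_le_log hHdpos hHdle
        _ = ((N : ℕ) : ℝ) * (Real.log (2 * (n : ℝ) ^ 2 * (B : ℝ)) + h) := hRHS
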